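/- Let m, a, α > 0 be real constants and let λ ∈ ℂ. There exists a twice continuously differentiable function f : [0,1] → ℂ, not identically zero, satisfying f''(x) = λ² f(x) for all x ∈ (0,1), f(0) = 0, and (1 + aλ) f'(1) + λ(α + mλ) f(1) = 0, if and only if λ satisfies the characteristic equation e^{2λ}(1 + α + (a+m)λ) + (1 − α) + (a − m)λ = 0. Moreover, every twice continuously differentiable f : [0,1] → ℂ satisfying these three conditions is a scalar multiple of f_λ(x) = e^{λx} − e^{−λx}; in particular, each eigenvalue of this boundary eigenvalue problem is geometrically simple. -/

import Mathlib

open Set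

lemma hasDerivAt_expl (l : ℂ) (x : ℝ) :
    HasDerivAt (fun y : ℝ => Complex.exp (l * y)) (l * Complex.exp (l * x)) x := by
  have h : HasDerivAt (fun z : ℂ => Complex.exp (l * z)) (l * Complex.exp (l * x)) (x : ℂ) := by
    simpa [mul_comm, Function.comp_def] using
      (Complex.hasDerivAt_exp (l * x)).comp (x : ℂ) ((hasDerivAt_id (x : ℂ)).const_mul l)
  exact h.comp_ofReal

lemma hasDerivAt_expl' (l : ℂ) (x : ℝ) :
    HasDerivAt (fun y : ℝ => Complex.exp (-(l * y))) (-l * Complex.exp (-(l * x))) x := by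
  simpa [neg_mul] using hasDerivAt_expl (-l) x

lemma contDiff_expl (l : ℂ) : ContDiff ℝ 2 (fun y : ℝ => Complex.exp (l * y)) :=
  Complex.contDiff_exp.comp
    ((contDiff_const.mul Complex.ofRealCLM.contDiff).of_le le_top)

lemma key (l : ℂ) (f : ℝ → ℂ) (hf : ContDiff ℝ 2 f)
    (hode : ∀ x ∈ Ioo (0:ℝ) 1, deriv (deriv f) x = l ^ 2 * f x) (h0 : f 0 = 0) :
    ∀ x ∈ Icc (0:ℝ) 1, deriv f x = l * f x + deriv f 0 * Complex.exp (-(l * x)) := by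
  have h2 : (2 : WithTop ℕ∞) = 1 + 1 := by norm_num
  rw [h2, contDiff_succ_iff_deriv] at hf
  have hdf : Differentiable ℝ f := hf.1
  have hf1 := contDiff_one_iff_deriv.mp hf.2.2
  have hdf' : Differentiable ℝ (deriv f) := hf1.1
  have hcont'' : Continuous (deriv (deriv f)) := hf1.2
  -- extend ODE to the closed interval
  have hodeI : ∀ x ∈ Icc (0:ℝ) 1, deriv (deriv f) x = l ^ 2 * f x := by
    have heq : EqOn (deriv (deriv f)) (fun x => l ^ 2 * f x) (Ioo (0:ℝ) 1) := hode
    have := heq.closure hcont'' (continuous_const.mul hdf.continuous)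
    rwa [closure_Ioo (by norm_num : (0:ℝ) ≠ 1)] at this
  set u : ℝ → ℂ := fun x => (deriv f x - l * f x) * Complex.exp (l * x) with hu_def
  have hu : ∀ x ∈ Icc (0:ℝ) 1, HasDerivAt u 0 x := by
    intro x hx
    have h1 : HasDerivAt u ((deriv (deriv f) x - l * deriv f x) * Complex.exp (l * x)
        + (deriv f x - l * f x) * (l * Complex.exp (l * x))) x :=
      (((hdf' x).hasDerivAt).sub (((hdf x).hasDerivAt).const_mul l)).mul (hasDerivAt_expl l x)
    convert h1 using 1
    rw [hodeI x hx]; ring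
  have hconst := constant_of_has_deriv_right_zero
    (f := u) (a := 0) (b := 1)
    (((hdf'.continuous.sub (continuous_const.mul hdf.continuous)).mul
      (Complex.continuous_exp.comp (continuous_const.mul Complex.continuous_ofReal))).continuousOn)
    (fun x hx => ((hu x (Ico_subset_Icc_self hx)).hasDerivWithinAt))
  intro x hx
  have h := hconst x hx
  have hu0 : u 0 = deriv f 0 := by simp [hu_def, h0]
  rw [hu0] at h
  have e1 : Complex.exp (-(l * x)) * Complex.exp (l * x) = 1 := by
    rw [← Complex.exp_add]; simp
  linear_combination Complex.exp (-(l * x)) * h - (deriv f x - l * f x) * e1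

lemma key2 (l : ℂ) (hl : l ≠ 0) (f : ℝ → ℂ) (hf : ContDiff ℝ 2 f)
    (hode : ∀ x ∈ Ioo (0:ℝ) 1, deriv (deriv f) x = l ^ 2 * f x) (h0 : f 0 = 0) :
    ∀ x ∈ Icc (0:ℝ) 1, f x = (deriv f 0 / (2 * l)) *
      (Complex.exp (l * x) - Complex.exp (-(l * x))) := by
  have hk := key l f hf hode h0
  have hdf : Differentiable ℝ f := hf.differentiable (by norm_num)
  set C := deriv f 0 with hC_def
  set v : ℝ → ℂ := fun x => f x * Complex.exp (-(l * x))
      + (C / (2 * l)) * Complex.exp (-(2 * l * x)) with hv_def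
  have hv : ∀ x ∈ Icc (0:ℝ) 1, HasDerivAt v 0 x := by
    intro x hx
    have h1 : HasDerivAt v (deriv f x * Complex.exp (-(l * x))
        + f x * (-l * Complex.exp (-(l * x)))
        + (C / (2 * l)) * (-(2 * l) * Complex.exp (-(2 * l * x)))) x :=
      ((((hdf x).hasDerivAt).mul (hasDerivAt_expl' l x)).add
        (((hasDerivAt_expl' (2 * l) x)).const_mul (C / (2 * l))))
    convert h1 using 1
    rw [hk x hx]
    have e3 : Complex.exp (-(l * x)) * Complex.exp (-(l * x))
        = Complex.exp (-(2 * l * x)) := by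
      rw [← Complex.exp_add]; congr 1; ring
    have h4 : (C / (2 * l)) * (-(2 * l) * Complex.exp (-(2 * l * x)))
        = -(C * Complex.exp (-(2 * l * x))) := by
      field_simp
    rw [h4]
    linear_combination -C * e3
  have hconst := constant_of_has_deriv_right_zero
    (f := v) (a := 0) (b := 1)
    (((hdf.continuous.mul (Complex.continuous_exp.comp
        ((continuous_const.mul Complex.continuous_ofReal).neg))).add
      (continuous_const.mul (Complex.continuous_exp.comp
        ((continuous_const.mul Complex.continuous_ofReal).neg)))).continuousOn)
    (fun x hx => ((hv x (Ico_subset_Icc_self hx)).hasDerivWithinAt))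
  intro x hx
  have h := hconst x hx
  have hv0 : v 0 = C / (2 * l) := by simp [hv_def, h0]
  rw [hv0] at h
  have e1 : Complex.exp (-(l * x)) * Complex.exp (l * x) = 1 := by
    rw [← Complex.exp_add]; simp
  have e2 : Complex.exp (-(2 * l * x)) * Complex.exp (l * x)
      = Complex.exp (-(l * x)) := by
    rw [← Complex.exp_add]; congr 1; ring
  linear_combination Complex.exp (l * x) * h - f x * e1 - (C / (2 * l)) * e2

/-- eigenvalue problem for the operator A:
`f'' = λ²f` on `(0,1)`, `f(0) = 0`, `(1+aλ)f'(1) + λ(α+mλ)f(1) = 0`.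
A nonzero C² solution exists iff the characteristic equation
`e^{2λ}(1+α+(a+m)λ) + (1-α) + (a-m)λ = 0` holds, and every solution is a
scalar multiple of `f_λ(x) = e^{λx} - e^{-λx}`. -/
theorem stmt4 (m a α : ℝ) (hm : 0 < m) (ha : 0 < a) (hα : 0 < α) (l : ℂ) :
    ((∃ f : ℝ → ℂ, ContDiff ℝ 2 f ∧
        (∃ x ∈ Icc (0:ℝ) 1, f x ≠ 0) ∧
        (∀ x ∈ Ioo (0:ℝ) 1, deriv (deriv f) x = l ^ 2 * f x) ∧
        f 0 = 0 ∧
        (1 + a * l) * deriv f 1 + l * (α + m * l) * f 1 = 0) ↔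
      Complex.exp (2 * l) * (1 + α + (a + m) * l) + (1 - α) + (a - m) * l = 0) ∧
    (∀ f : ℝ → ℂ, ContDiff ℝ 2 f →
        (∀ x ∈ Ioo (0:ℝ) 1, deriv (deriv f) x = l ^ 2 * f x) →
        f 0 = 0 →
        (1 + a * l) * deriv f 1 + l * (α + m * l) * f 1 = 0 →
        ∃ c : ℂ, ∀ x ∈ Icc (0:ℝ) 1,
          f x = c * (Complex.exp (l * x) - Complex.exp (-(l * x)))) := by
  -- the zero-λ case: f vanishes on [0,1]
  have hzero : ∀ f : ℝ → ℂ, ContDiff ℝ 2 f →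
      (∀ x ∈ Ioo (0:ℝ) 1, deriv (deriv f) x = l ^ 2 * f x) →
      f 0 = 0 →
      (1 + a * l) * deriv f 1 + l * (α + m * l) * f 1 = 0 →
      l = 0 → ∀ x ∈ Icc (0:ℝ) 1, f x = 0 := by
    intro f hf hode h0 hbc hl0
    subst hl0
    have hk := key 0 f hf hode h0
    have hd1 : deriv f 1 = deriv f 0 := by
      have := hk 1 (by norm_num)
      simpa using this
    have hC0 : deriv f 0 = 0 := by
      rw [hd1] at hbc
      simpa using hbc
    have hdf : Differentiable ℝ f := hf.differentiable (by norm_num)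
    have hconst := constant_of_has_deriv_right_zero (f := f) (a := 0) (b := 1)
      hdf.continuous.continuousOn
      (fun x hx => by
        have h := hk x (Ico_subset_Icc_self hx)
        simp only [hC0, zero_mul, mul_zero, zero_add, add_zero] at h
        exact (h ▸ (hdf x).hasDerivAt).hasDerivWithinAt)
    intro x hx
    rw [hconst x hx, h0]
  constructor
  · constructor
    · rintro ⟨f, hf, ⟨x₀, hx₀, hfx₀⟩, hode, h0, hbc⟩
      by_cases hl : l = 0
      · exact absurd (hzero f hf hode h0 hbc hl x₀ hx₀) hfx₀
      · set C := deriv f 0 with hC_def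
        set c : ℂ := C / (2 * l) with hc_def
        have hk := key l f hf hode h0
        have hk2 := key2 l hl f hf hode h0
        have hc : c ≠ 0 := by
          intro h
          apply hfx₀
          rw [hk2 x₀ hx₀, ← hc_def, h, zero_mul]
        have h2l : (2 : ℂ) * l ≠ 0 := by
          simp [hl]
        have hC2 : C = 2 * l * c := by
          rw [hc_def]; field_simp
        have hf1 : f 1 = c * (Complex.exp l - Complex.exp (-l)) := by
          have := hk2 1 (by norm_num)
          simpa using this
        have hD : deriv f 1 = l * c * (Complex.exp l + Complex.exp (-l)) := by
          have h := hk 1 (by norm_num)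
          simp only [Complex.ofReal_one, mul_one] at h
          rw [h, hf1, ← hC_def, hC2]; ring
        rw [hf1, hD] at hbc
        set P := Complex.exp l
        set Q := Complex.exp (-l)
        have h1 : Q * P = 1 := by
          rw [← Complex.exp_add]; simp
        have h2 : P * P = Complex.exp (2 * l) := by
          rw [← Complex.exp_add]; congr 1; ring
        have key3 : l * c * (P * (1 + α + (a + m) * l) + Q * (1 - α + (a - m) * l)) = 0 := by
          linear_combination hbc
        have h4 : P * (1 + α + (a + m) * l) + Q * (1 - α + (a - m) * l) = 0 := by
          rcases mul_eq_zero.mp key3 with h | h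
          · exact absurd h (mul_ne_zero hl hc)
          · exact h
        linear_combination P * h4 - (1 + (α:ℂ) + ((a:ℂ) + m) * l) * h2
          - (1 - (α:ℂ) + ((a:ℂ) - m) * l) * h1
    · intro hchar
      have hl : l ≠ 0 := by
        intro h
        rw [h] at hchar
        simp only [mul_zero, Complex.exp_zero, one_mul, add_zero] at hchar
        have h2 : (2:ℂ) = 0 := by linear_combination hchar
        norm_num at h2
      set f : ℝ → ℂ := fun x : ℝ => Complex.exp (l * x) - Complex.exp (-(l * x)) with hf_def
      have hd : ∀ y : ℝ, HasDerivAt f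
          (l * Complex.exp (l * y) + l * Complex.exp (-(l * y))) y := by
        intro y
        have := (hasDerivAt_expl l y).sub (hasDerivAt_expl' l y)
        exact this.congr_deriv (by ring)
      have hderiv : deriv f = fun y : ℝ =>
          l * Complex.exp (l * y) + l * Complex.exp (-(l * y)) :=
        funext fun y => (hd y).deriv
      refine ⟨f, ?_, ?_, ?_, ?_, ?_⟩
      · simpa [hf_def, neg_mul] using (contDiff_expl l).sub (contDiff_expl (-l))
      · -- nonzero at x = 1
        refine ⟨1, by norm_num, ?_⟩
        intro hf1
        simp only [hf_def, Complex.ofReal_one, mul_one, sub_eq_zero] at hf1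
        have h1 : Complex.exp (-l) * Complex.exp l = 1 := by
          rw [← Complex.exp_add]; simp
        have h2 : Complex.exp l * Complex.exp l = Complex.exp (2 * l) := by
          rw [← Complex.exp_add]; congr 1; ring
        have hE : Complex.exp (2 * l) = 1 := by
          linear_combination Complex.exp l * hf1 - h2 + h1
        have haC : (a : ℂ) ≠ 0 := Complex.ofReal_ne_zero.mpr ha.ne'
        rw [hE] at hchar
        have hla : l * (a : ℂ) = -1 := by linear_combination (1/2 : ℂ) * hchar
        have h2l : 2 * l = ((-2 / a : ℝ) : ℂ) := by
          push_cast
          field_simp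
          linear_combination hla
        have habs : Real.exp (-2 / a) = 1 := by
          have := congrArg norm hE
          rwa [h2l, Complex.norm_exp, Complex.ofReal_re, norm_one] at this
        have h0' : -2 / a = 0 := Real.exp_injective (by rw [habs, Real.exp_zero])
        have : a ≠ 0 := ha.ne'
        field_simp at h0'
        norm_num at h0'
      · -- ODE
        intro x _
        rw [hderiv]
        have hd2 : HasDerivAt (fun y : ℝ =>
            l * Complex.exp (l * y) + l * Complex.exp (-(l * y)))
            (l * (l * Complex.exp (l * x)) + l * (-l * Complex.exp (-(l * x)))) x :=
          ((hasDerivAt_expl l x).const_mul l).add ((hasDerivAt_expl' l x).const_mul l)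
        rw [hd2.deriv, hf_def]; ring
      · simp [hf_def]
      · -- boundary condition
        rw [hderiv]
        simp only [hf_def, Complex.ofReal_one, mul_one]
        have h3 : Complex.exp (-l) * Complex.exp (2 * l) = Complex.exp l := by
          rw [← Complex.exp_add]; congr 1; ring
        linear_combination l * Complex.exp (-l) * hchar
          - l * (1 + (α:ℂ) + ((a:ℂ) + m) * l) * h3
  · intro f hf hode h0 hbc
    by_cases hl : l = 0
    · refine ⟨0, fun x hx => ?_⟩
      rw [hzero f hf hode h0 hbc hl x hx, zero_mul]
    · exact ⟨deriv f 0 / (2 * l), key2 l hl f hf hode h0⟩
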